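/- arXiv:math/0304490 — 3 statements merged into one kernel-verified Lean document; each statement's English description precedes it below -/
import Mathlib

section
/- Let n ≥ 3 be a composite modulus and t ∈ Z_n \ {0}. The groupoid Z_n(t,t) with a * b = ta + tb (mod n) is alternative (both left and right alternative) if and only if t² ≡ t (mod n). -/
/-- For a composite modulus n ≥ 3 and nonzero t in Z_n, the
groupoid Z_n(t,t) with a * b = t*a + t*b is alternative (both left and
right alternative) iff t² ≡ t (mod n). -/
theorem stmt7 (n : ℕ) (hn : 3 ≤ n) (hcomp : ¬ n.Prime) (t : ZMod n) (ht : t ≠ 0) :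
    ((∀ x y : ZMod n,
        t * (t * x + t * y) + t * y = t * x + t * (t * y + t * y)) ∧
     (∀ x y : ZMod n,
        t * (t * x + t * x) + t * y = t * x + t * (t * x + t * y))) ↔
      t ^ 2 = t := by
  constructor
  · rintro ⟨h1, -⟩
    have := h1 1 0
    simp at this
    simpa [sq] using this
  · intro h
    have h' : t * t = t := by simpa [sq] using h
    constructor <;> intro x y <;>
      [skip; skip] <;>
      · have e1 : t * (t * x + t * y) = t * x + t * y := by
          rw [mul_add, ← mul_assoc, ← mul_assoc, h']
        have e2 : t * (t * y + t * y) = t * y + t * y := by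
          rw [mul_add, ← mul_assoc, h']
        have e3 : t * (t * x + t * x) = t * x + t * x := by
          rw [mul_add, ← mul_assoc, h']
        rw [e1]
        first
        | (rw [e2]; ring)
        | (rw [e3]; ring)
end

section
/- Let n ≥ 3 and t, u ∈ Z_n \ {0}. The groupoid Z_n(t,u) satisfies the Bol identity ((x * y) * z) * y = x * ((y * z) * y) for all x, y, z if t³ ≡ t (mod n) and u² ≡ u (mod n). -/
/-- For n ≥ 3 and nonzero t, u in Z_n, if t³ ≡ t and u² ≡ u
(mod n) then Z_n(t,u) satisfies the Bol identity ((x*y)*z)*y = x*((y*z)*y). -/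
theorem stmt12 (n : ℕ) (hn : 3 ≤ n) (t u : ZMod n) (ht : t ≠ 0) (hu : u ≠ 0)
    (ht3 : t ^ 3 = t) (hu2 : u ^ 2 = u) :
    ∀ x y z : ZMod n,
      t * (t * (t * x + u * y) + u * z) + u * y
        = t * x + u * (t * (t * y + u * z) + u * y) := by
  intro x y z
  have h : t * (t * (t * x + u * y) + u * z) + u * y
      = t ^ 3 * x + t ^ 2 * u * y + t * u * z + u * y := by ring
  have h2 : t * x + u * (t * (t * y + u * z) + u * y)
      = t * x + t ^ 2 * u * y + t * u ^ 2 * z + u ^ 2 * y := by ring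
  rw [h, h2, ht3, hu2]
end

section
/- Let n ≥ 3 and t, u ∈ Z_n \ {0}. The groupoid Z_n(t,u) satisfies the Moufang identity (x * y) * (z * x) = (x * (y * z)) * x for all x, y, z if t² ≡ t (mod n) and u² ≡ u (mod n). -/
/-- For n ≥ 3 and nonzero t, u in Z_n, if t² ≡ t and u² ≡ u
(mod n) then Z_n(t,u) satisfies the Moufang identity
(x*y)*(z*x) = (x*(y*z))*x. -/
theorem stmt13 (n : ℕ) (hn : 3 ≤ n) (t u : ZMod n) (ht : t ≠ 0) (hu : u ≠ 0)
    (ht2 : t ^ 2 = t) (hu2 : u ^ 2 = u) :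
    ∀ x y z : ZMod n,
      t * (t * x + u * y) + u * (t * z + u * x)
        = t * (t * x + u * (t * y + u * z)) + u * x := by
  intro x y z
  ring_nf
  rw [show t^2 = t from ht2, show u^2 = u from hu2]
  ring_nf
end
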